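/- Let A be a commutative ring that is also a ℚ-algebra, and let D₁, D₂ : A → A be two derivations with D₁ ∘ D₂ = D₂ ∘ D₁. For f, g ∈ A and m ∈ ℕ define the m-th Moyal term B_m(f,g) := Σ_{k₁+k₂=m} ((−1)^{k₂}/(2^m · k₁! · k₂!)) · (D₁^{k₁} D₂^{k₂} f) · (D₁^{k₂} D₂^{k₁} g) ∈ A, and define the Moyal star product ⋆ on A[[t]] by declaring that the n-th coefficient of f ⋆ g is Σ_{p+q+m=n} B_m(f_p, g_q). Extend D₁ and D₂ coefficientwise to maps A[[t]] → A[[t]]. Then D₁ and D₂ are derivations with respect to the Moyal star product: D₁(f ⋆ g) = (D₁ f) ⋆ g + f ⋆ (D₁ g) and D₂(f ⋆ g) = (D₂ f) ⋆ g + f ⋆ (D₂ g) for all f, g ∈ A[[t]]. -/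

import Mathlib

open Finset

/-- The `m`-th term of the Moyal star product built from two derivations `D₁, D₂`. -/
noncomputable def moyalTerm {A : Type*} [CommRing A] [Algebra ℚ A]
    (D₁ D₂ : Derivation ℚ A A) (m : ℕ) (f g : A) : A :=
  ∑ k ∈ Finset.HasAntidiagonal.antidiagonal m,
    (((-1 : ℚ) ^ k.2 / (2 ^ m * k.1.factorial * k.2.factorial)) •
      ((⇑D₁)^[k.1] ((⇑D₂)^[k.2] f) * (⇑D₁)^[k.2] ((⇑D₂)^[k.1] g)))

/-- The Moyal star product on `A⟦t⟧`. -/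
noncomputable def moyalStar {A : Type*} [CommRing A] [Algebra ℚ A]
    (D₁ D₂ : Derivation ℚ A A) (f g : PowerSeries A) : PowerSeries A :=
  PowerSeries.mk fun n =>
    ∑ am ∈ Finset.HasAntidiagonal.antidiagonal n, ∑ pq ∈ Finset.HasAntidiagonal.antidiagonal am.1,
      moyalTerm D₁ D₂ am.2 (PowerSeries.coeff pq.1 f) (PowerSeries.coeff pq.2 g)

/-- The coefficientwise extension of a map `A → A` to `A⟦t⟧`. -/
noncomputable def coeffwise {A : Type*} [CommRing A] (D : A → A) (f : PowerSeries A) :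
    PowerSeries A :=
  PowerSeries.mk fun n => D (PowerSeries.coeff n f)

lemma iterate_comm {A : Type*} (D E : A → A) (h : ∀ a, D (E a) = E (D a)) (k : ℕ) (a : A) :
    D (E^[k] a) = E^[k] (D a) := by
  induction k generalizing a with
  | zero => simp
  | succ n ih => rw [Function.iterate_succ_apply, ih, h, Function.iterate_succ_apply]

lemma moyalTerm_leibniz {A : Type*} [CommRing A] [Algebra ℚ A]
    (D₁ D₂ : Derivation ℚ A A) (D : Derivation ℚ A A)
    (h1 : ∀ a, D (D₁ a) = D₁ (D a)) (h2 : ∀ a, D (D₂ a) = D₂ (D a))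
    (m : ℕ) (f g : A) :
    D (moyalTerm D₁ D₂ m f g) = moyalTerm D₁ D₂ m (D f) g + moyalTerm D₁ D₂ m f (D g) := by
  unfold moyalTerm
  rw [map_sum, ← Finset.sum_add_distrib]
  refine Finset.sum_congr rfl fun k _ => ?_
  rw [D.map_smul, Derivation.leibniz, smul_add, add_comm]
  congr 1
  · congr 1
    rw [smul_eq_mul, mul_comm, iterate_comm (⇑D) _ h1, iterate_comm (⇑D) _ h2]
  · congr 1
    rw [smul_eq_mul, iterate_comm (⇑D) _ h1, iterate_comm (⇑D) _ h2]

/-- The coefficientwise extensions of `D₁` and `D₂` are derivations with respect to the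
Moyal star product. -/
theorem coeffwise_derivation_moyalStar {A : Type*} [CommRing A] [Algebra ℚ A]
    (D₁ D₂ : Derivation ℚ A A) (hcomm : ∀ a : A, D₁ (D₂ a) = D₂ (D₁ a))
    (f g : PowerSeries A) :
    coeffwise D₁ (moyalStar D₁ D₂ f g) =
      moyalStar D₁ D₂ (coeffwise D₁ f) g + moyalStar D₁ D₂ f (coeffwise D₁ g) ∧
    coeffwise D₂ (moyalStar D₁ D₂ f g) =
      moyalStar D₁ D₂ (coeffwise D₂ f) g + moyalStar D₁ D₂ f (coeffwise D₂ g) := by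
  constructor <;>
  · ext n
    simp only [coeffwise, moyalStar, PowerSeries.coeff_mk, map_add, map_sum,
      Finset.sum_add_distrib]
    rw [← Finset.sum_add_distrib]
    refine Finset.sum_congr rfl fun am _ => ?_
    rw [← Finset.sum_add_distrib]
    refine Finset.sum_congr rfl fun pq _ => ?_
    first
    | exact moyalTerm_leibniz D₁ D₂ D₁ (fun _ => rfl) hcomm _ _ _
    | exact moyalTerm_leibniz D₁ D₂ D₂ (fun a => (hcomm a).symm) (fun _ => rfl) _ _ _
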